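/- In Theorem 5, the worst-case information leakage of the (M,2) Scheme 2 with S ~ Uniform(B_{w,M}) is ρ^{WIL} = log₂ M − min{log₂(w+1), log₂(M−w+1)}. Precisely: with m ~ Uniform([M]) and Q₂ = S + e_m, conditioned on Q₂ = q with w_H(q) = w + 1, the index m is uniformly distributed over the w+1 positions where q has a 1; conditioned on Q₂ = q with w_H(q) = w − 1, m is uniform over the M − w + 1 positions where q has a 0. Hence min over query values q of H(m | Q₂ = q) = min{log₂(w+1), log₂(M−w+1)} (taking the minimum only over values q of positive probability, with the convention that when w = 0 only weight-1 queries occur and when w = M only weight-(M−1) queries occur). -/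

import Mathlib

open Finset Real

/-- Hamming weight of a binary vector. -/
def wt {M : ℕ} (v : Fin M → Bool) : ℕ := (Finset.univ.filter fun i => v i = true).card

/-- The set `B_{w,M}` of binary length-`M` vectors of Hamming weight `w`. -/
def Bw (M w : ℕ) : Finset (Fin M → Bool) := Finset.univ.filter fun v => wt v = w

/-- Flip coordinate `m` of the binary vector `v` (addition of `e_m` over GF(2)). -/
def flipAt {M : ℕ} (v : Fin M → Bool) (m : Fin M) : Fin M → Bool :=
  Function.update v m (!v m)

/-- Joint distribution of `(m, Q₂)` in the `(M,2)` Scheme 2 with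
`S ~ Uniform(B_{w,M})`, `m ~ Uniform([M])` independent of `S`, and `Q₂ = S + e_m`:
`P(m, q) = (1/M)(1/|B_{w,M}|)` if flipping coordinate `m` of `q` lands in `B_{w,M}`,
else `0`. -/
noncomputable def jointP (M w : ℕ) (m : Fin M) (q : Fin M → Bool) : ℝ :=
  (M : ℝ)⁻¹ * ((Bw M w).card : ℝ)⁻¹ * (if flipAt q m ∈ Bw M w then 1 else 0)

/-- Marginal distribution of the query `Q₂`. -/
noncomputable def margQ (M w : ℕ) (q : Fin M → Bool) : ℝ := ∑ m : Fin M, jointP M w m q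

/-- Conditional entropy `H(m | Q₂ = q)` in bits. -/
noncomputable def condH (M w : ℕ) (q : Fin M → Bool) : ℝ :=
  -∑ m : Fin M, (jointP M w m q / margQ M w q) *
      Real.logb 2 (jointP M w m q / margQ M w q)

lemma wt_flip_true {M : ℕ} {q : Fin M → Bool} {m : Fin M} (h : q m = true) :
    wt q = wt (flipAt q m) + 1 := by
  have hset : (Finset.univ.filter fun i => flipAt q m i = true)
      = (Finset.univ.filter fun i => q i = true).erase m := by
    ext i
    simp only [mem_filter, mem_univ, true_and, mem_erase]; simp only [flipAt]
    rcases eq_or_ne i m with rfl | hne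
    · simp [h]
    · simp [Function.update_of_ne hne, hne]
  have hm : m ∈ (Finset.univ.filter fun i => q i = true) := by simp [h]
  unfold wt
  rw [hset, Finset.card_erase_of_mem hm]
  have := Finset.card_pos.mpr ⟨m, hm⟩; omega
  
lemma wt_flip_false {M : ℕ} {q : Fin M → Bool} {m : Fin M} (h : q m = false) :
    wt (flipAt q m) = wt q + 1 := by
  have hset : (Finset.univ.filter fun i => flipAt q m i = true)
      = insert m (Finset.univ.filter fun i => q i = true) := by
    ext i
    simp only [mem_filter, mem_univ, true_and, mem_insert]; simp only [flipAt]
    rcases eq_or_ne i m with rfl | hne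
    · simp [h]
    · simp [Function.update_of_ne hne, hne]
  have hm : m ∉ (Finset.univ.filter fun i => q i = true) := by simp [h]
  unfold wt
  rw [hset, Finset.card_insert_of_notMem hm]

def cnt (M w : ℕ) (q : Fin M → Bool) : ℕ :=
  (Finset.univ.filter fun m : Fin M => flipAt q m ∈ Bw M w).card

lemma flip_mem_iff {M w : ℕ} (q : Fin M → Bool) (m : Fin M) :
    flipAt q m ∈ Bw M w ↔
      (q m = true ∧ wt q = w + 1) ∨ (q m = false ∧ wt q + 1 = w) := by
  simp only [Bw, mem_filter, mem_univ, true_and]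
  cases hqm : q m
  · have := wt_flip_false hqm
    constructor
    · intro h; exact Or.inr ⟨rfl, by omega⟩
    · rintro (⟨h, _⟩ | ⟨_, h⟩); · simp at h
      omega
  · have := wt_flip_true hqm
    constructor
    · intro h; exact Or.inl ⟨rfl, by omega⟩
    · rintro (⟨_, h⟩ | ⟨h, _⟩); · omega
      simp at h

lemma cnt_of_wt_succ {M w : ℕ} {q : Fin M → Bool} (h : wt q = w + 1) :
    cnt M w q = w + 1 := by
  unfold cnt
  have : (Finset.univ.filter fun m : Fin M => flipAt q m ∈ Bw M w)
      = Finset.univ.filter fun m => q m = true := by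
    ext m
    simp only [mem_filter, mem_univ, true_and, flip_mem_iff]
    constructor
    · rintro (⟨h1, _⟩ | ⟨_, h2⟩); · exact h1
      exfalso; omega
    · intro hm; exact Or.inl ⟨hm, h⟩
  rw [this]; exact h ▸ rfl

lemma cnt_of_wt_pred {M w : ℕ} {q : Fin M → Bool} (hw : w ≤ M) (h : wt q + 1 = w) :
    cnt M w q = M - w + 1 := by
  unfold cnt
  have hwle : wt q ≤ M := by
    simpa [wt] using Finset.card_filter_le Finset.univ (fun i : Fin M => q i = true)
  have hset : (Finset.univ.filter fun m : Fin M => flipAt q m ∈ Bw M w)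
      = Finset.univ.filter fun m => q m = false := by
    ext m
    simp only [mem_filter, mem_univ, true_and, flip_mem_iff]
    constructor
    · rintro (⟨_, h1⟩ | ⟨h2, _⟩); · exfalso; omega
      exact h2
    · intro hm; exact Or.inr ⟨hm, h⟩
  rw [hset]
  have hsplit : wt q + (Finset.univ.filter fun m : Fin M => q m = false).card = M := by
    have := Finset.card_filter_add_card_filter_not
      (s := (Finset.univ : Finset (Fin M))) (p := fun m => q m = true)
    simpa [wt, Bool.not_eq_true, Finset.card_univ] using this
  have key : ∀ a k, a + 1 = w → w ≤ M → a + k = M → k = M - w + 1 := by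
    intro a k h1 h2 h3; omega
  exact key _ _ h hw hsplit

lemma cnt_zero {M w : ℕ} {q : Fin M → Bool} (h1 : wt q ≠ w + 1) (h2 : wt q + 1 ≠ w) :
    cnt M w q = 0 := by
  unfold cnt
  rw [Finset.card_eq_zero, Finset.filter_eq_empty_iff]
  intro m _
  rw [flip_mem_iff]
  rintro (⟨_, h⟩ | ⟨_, h⟩) <;> [exact h1 h; exact h2 h]

lemma margQ_eq (M w : ℕ) (q : Fin M → Bool) :
    margQ M w q = (M : ℝ)⁻¹ * ((Bw M w).card : ℝ)⁻¹ * (cnt M w q : ℝ) := by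
  unfold margQ jointP cnt
  rw [← Finset.mul_sum]
  congr 1
  rw [Finset.sum_boole]

lemma exists_wt {M : ℕ} (k : ℕ) (hk : k ≤ M) : ∃ q : Fin M → Bool, wt q = k := by
  refine ⟨fun i => decide (i.val < k), ?_⟩
  unfold wt
  have : (Finset.univ.filter fun i : Fin M => (decide (i.val < k)) = true)
      = (Finset.range k).attachFin (fun m hm => lt_of_lt_of_le (Finset.mem_range.mp hm) hk) := by
    ext i
    simp [Finset.mem_attachFin]
  rw [this, Finset.card_attachFin, Finset.card_range]

lemma Bw_card_pos (M w : ℕ) (hw : w ≤ M) : 0 < ((Bw M w).card) := by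
  obtain ⟨q, hq⟩ := exists_wt w hw
  exact Finset.card_pos.mpr ⟨q, by simp [Bw, hq]⟩

lemma margQ_pos_iff (M w : ℕ) (hM : 1 ≤ M) (hw : w ≤ M) (q : Fin M → Bool) :
    0 < margQ M w q ↔ 0 < cnt M w q := by
  rw [margQ_eq]
  have h1 : (0:ℝ) < (M : ℝ)⁻¹ := by positivity
  have h2 : (0:ℝ) < ((Bw M w).card : ℝ)⁻¹ := by
    have := Bw_card_pos M w hw
    positivity
  constructor
  · intro h
    by_contra hc
    have : cnt M w q = 0 := by omega
    rw [this] at h; simp at h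
  · intro h
    have : (0:ℝ) < (cnt M w q : ℝ) := by exact_mod_cast h
    positivity

lemma condH_eq (M w : ℕ) (hM : 1 ≤ M) (hw : w ≤ M) (q : Fin M → Bool)
    (hc : 0 < cnt M w q) :
    condH M w q = Real.logb 2 (cnt M w q : ℝ) := by
  have hBw := Bw_card_pos M w hw
  have ha : (0:ℝ) < (M : ℝ)⁻¹ * ((Bw M w).card : ℝ)⁻¹ := by positivity
  have hcR : (0:ℝ) < (cnt M w q : ℝ) := by exact_mod_cast hc
  have hratio : ∀ m : Fin M, jointP M w m q / margQ M w q
      = if flipAt q m ∈ Bw M w then ((cnt M w q : ℝ))⁻¹ else 0 := by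
    intro m
    rw [margQ_eq, jointP]
    rcases (em (flipAt q m ∈ Bw M w)) with h | h
    · simp only [h, if_true, mul_one]
      rw [div_eq_iff (by positivity)]
      field_simp
    · simp [h]
  unfold condH
  rw [Finset.sum_congr rfl (fun m _ => by rw [hratio m])]
  have hterm : ∀ m : Fin M,
      (if flipAt q m ∈ Bw M w then ((cnt M w q : ℝ))⁻¹ else 0) *
        Real.logb 2 (if flipAt q m ∈ Bw M w then ((cnt M w q : ℝ))⁻¹ else 0)
      = if flipAt q m ∈ Bw M w then ((cnt M w q : ℝ))⁻¹ * Real.logb 2 ((cnt M w q : ℝ))⁻¹ else 0 := by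
    intro m
    rcases (em (flipAt q m ∈ Bw M w)) with h | h <;> simp [h]
  rw [Finset.sum_congr rfl (fun m _ => hterm m), ← Finset.sum_filter,
    Finset.sum_const]
  show -((cnt M w q : ℕ) • (((cnt M w q : ℝ))⁻¹ * Real.logb 2 ((cnt M w q : ℝ))⁻¹)) = _
  rw [nsmul_eq_mul, ← mul_assoc, mul_inv_cancel₀ (ne_of_gt hcR), one_mul,
    Real.logb_inv]
  ring

lemma cast_Mw (M w : ℕ) (hw : w ≤ M) : ((M - w + 1 : ℕ) : ℝ) = (M : ℝ) - (w : ℝ) + 1 := by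
  push_cast [Nat.cast_sub hw]; ring

lemma witness_succ {M w : ℕ} (hM : 1 ≤ M) (hw : w ≤ M) (hwM : w < M) :
    ∃ q : Fin M → Bool, 0 < margQ M w q ∧ condH M w q = Real.logb 2 ((w : ℝ) + 1) := by
  obtain ⟨q, hq⟩ := exists_wt (M := M) (w + 1) (by omega)
  have hcnt := cnt_of_wt_succ hq
  have hcpos : 0 < cnt M w q := by omega
  refine ⟨q, (margQ_pos_iff M w hM hw q).mpr hcpos, ?_⟩
  rw [condH_eq M w hM hw q hcpos, hcnt]
  push_cast
  ring_nf

lemma witness_pred {M w : ℕ} (hM : 1 ≤ M) (hw : w ≤ M) (hw1 : 1 ≤ w) :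
    ∃ q : Fin M → Bool, 0 < margQ M w q ∧
      condH M w q = Real.logb 2 ((M : ℝ) - (w : ℝ) + 1) := by
  obtain ⟨q, hq⟩ := exists_wt (M := M) (w - 1) (by omega)
  have hq' : wt q + 1 = w := by omega
  have hcnt := cnt_of_wt_pred hw hq'
  have hcpos : 0 < cnt M w q := by omega
  refine ⟨q, (margQ_pos_iff M w hM hw q).mpr hcpos, ?_⟩
  rw [condH_eq M w hM hw q hcpos, hcnt, cast_Mw M w hw]

lemma condH_mem {M w : ℕ} (hM : 1 ≤ M) (hw : w ≤ M) (q : Fin M → Bool)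
    (hq : 0 < margQ M w q) :
    condH M w q = Real.logb 2 ((w : ℝ) + 1) ∨
      condH M w q = Real.logb 2 ((M : ℝ) - (w : ℝ) + 1) := by
  have hc : 0 < cnt M w q := (margQ_pos_iff M w hM hw q).mp hq
  by_cases h1 : wt q = w + 1
  · left
    rw [condH_eq M w hM hw q hc, cnt_of_wt_succ h1]
    push_cast; ring_nf
  · by_cases h2 : wt q + 1 = w
    · right
      rw [condH_eq M w hM hw q hc, cnt_of_wt_pred hw h2, cast_Mw M w hw]
    · exfalso; have := cnt_zero h1 h2; omega

/-- Worst-case information leakage of the `(M,2)` Scheme 2 with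
`S ~ Uniform(B_{w,M})`: the minimum of `H(m | Q₂ = q)` over query values `q` of
positive probability equals `min{log₂(w+1), log₂(M-w+1)}`, so the worst-case
information leakage is `log₂ M - min{log₂(w+1), log₂(M-w+1)}`. -/
theorem scheme2_worst_case_leakage (M w : ℕ) (hM : 1 ≤ M) (hw : w ≤ M)
    (hne : (Finset.univ.filter fun q : Fin M → Bool => 0 < margQ M w q).Nonempty) :
    Real.logb 2 (M : ℝ) -
        (Finset.univ.filter fun q : Fin M → Bool => 0 < margQ M w q).inf' hne
          (condH M w)
      = Real.logb 2 (M : ℝ) -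
          min (Real.logb 2 ((w : ℝ) + 1)) (Real.logb 2 ((M : ℝ) - (w : ℝ) + 1)) := by

  congr 1
  set a := Real.logb 2 ((w : ℝ) + 1) with hadef
  set b := Real.logb 2 ((M : ℝ) - (w : ℝ) + 1) with hbdef
  have ha0 : 0 ≤ a := Real.logb_nonneg (by norm_num) (by linarith [Nat.cast_nonneg (α := ℝ) w])
  have hb0 : 0 ≤ b := by
    apply Real.logb_nonneg (by norm_num)
    have : (w : ℝ) ≤ (M : ℝ) := by exact_mod_cast hw
    linarith
  apply le_antisymm
  · -- inf' ≤ min a b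
    rcases le_or_gt a b with hab | hab
    · rw [min_eq_left hab]
      rcases lt_or_eq_of_le hw with hwM | hwM
      · obtain ⟨q, hq1, hq2⟩ := witness_succ hM hw hwM
        calc _ ≤ condH M w q := Finset.inf'_le _ (by simp [hq1])
          _ = a := hq2
      · -- w = M, so b = 0, a = 0
        have hbz : b = 0 := by
          rw [hbdef, hwM]; simp
        have haz : a = 0 := le_antisymm (hbz ▸ hab) ha0
        obtain ⟨q, hq1, hq2⟩ := witness_pred hM hw (by omega)
        calc _ ≤ condH M w q := Finset.inf'_le _ (by simp [hq1])
          _ = a := by rw [hq2, ← hbdef, hbz, haz]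
    · rw [min_eq_right hab.le]
      have hw1 : 1 ≤ w := by
        by_contra h
        have : w = 0 := by omega
        rw [hadef, this] at hab
        simp at hab
        linarith
      obtain ⟨q, hq1, hq2⟩ := witness_pred hM hw hw1
      calc _ ≤ condH M w q := Finset.inf'_le _ (by simp [hq1])
        _ = b := hq2
  · apply Finset.le_inf'
    intro q hq
    rw [Finset.mem_filter] at hq
    rcases condH_mem hM hw q hq.2 with h | h
    · rw [h]; exact min_le_left _ _
    · rw [h]; exact min_le_right _ _
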